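/- If A ⊆ {1,...,n} is a Sidon set (all pairwise sums a+b with a ≤ b distinct), then |A| < n^{1/2} + n^{1/4} + 1. -/
import Mathlib

-- Gauss-type sum
lemma sumg (l : ℕ) : ∑ d ∈ Finset.Icc (1-(l:ℤ)) ((l:ℤ)-1), (l - d.natAbs) = l*l := by
  induction l with
  | zero => simp
  | succ m ih =>
    rcases Nat.eq_zero_or_pos m with hm | hm
    · subst hm; simp
    · have hset : Finset.Icc (1-((m+1:ℕ):ℤ)) (((m+1:ℕ):ℤ)-1)
          = insert (-(m:ℤ)) (insert (m:ℤ) (Finset.Icc (1-(m:ℤ)) ((m:ℤ)-1))) := by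
        ext d; simp only [Finset.mem_Icc, Finset.mem_insert]; push_cast; omega
      rw [hset, Finset.sum_insert, Finset.sum_insert]
      · have hinner : ∑ d ∈ Finset.Icc (1-(m:ℤ)) ((m:ℤ)-1), ((m+1 : ℕ) - d.natAbs)
            = ∑ d ∈ Finset.Icc (1-(m:ℤ)) ((m:ℤ)-1), ((m - d.natAbs) + 1) := by
          apply Finset.sum_congr rfl
          intro d hd
          simp only [Finset.mem_Icc] at hd
          omega
        rw [hinner, Finset.sum_add_distrib, ih, Finset.sum_const, Int.card_Icc]
        have : ((m:ℤ) - 1 + 1 - (1 - m)).toNat = 2*m - 1 := by omega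
        rw [this]
        have h1 : ((m+1:ℕ) - ((m:ℤ)).natAbs) = 1 := by omega
        have h2 : ((m+1:ℕ) - (-(m:ℤ)).natAbs) = 1 := by omega
        rw [h1, h2]
        simp only [smul_eq_mul, mul_one]
        have : (m+1)*(m+1) = m*m + 2*m+1 := by ring
        omega
      · simp only [Finset.mem_Icc]; omega
      · simp only [Finset.mem_insert, Finset.mem_Icc]; omega

lemma windows_sum (n l : ℕ) (A : Finset ℕ) (hsub : A ⊆ Finset.Icc 1 n) :
    ∑ t ∈ Finset.Icc (1-(l:ℤ)) ((n:ℤ)-1),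
      (A.filter (fun a : ℕ => t+1 ≤ (a:ℤ) ∧ (a:ℤ) ≤ t+l)).card = A.card * l := by
  simp_rw [Finset.card_filter]
  rw [Finset.sum_comm]
  have key : ∀ a ∈ A, (∑ t ∈ Finset.Icc (1-(l:ℤ)) ((n:ℤ)-1),
      if (t+1 ≤ (a:ℤ) ∧ (a:ℤ) ≤ t+l) then 1 else 0) = l := by
    intro a ha
    have hab := Finset.mem_Icc.mp (hsub ha)
    rw [Finset.sum_boole]
    have : (Finset.Icc (1-(l:ℤ)) ((n:ℤ)-1)).filter (fun t => t+1 ≤ (a:ℤ) ∧ (a:ℤ) ≤ t+l)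
        = Finset.Icc ((a:ℤ)-l) ((a:ℤ)-1) := by
      ext t; simp only [Finset.mem_filter, Finset.mem_Icc]; omega
    rw [this, Int.card_Icc]
    simp only [Nat.cast_id]
    omega
  rw [Finset.sum_congr rfl key, Finset.sum_const, smul_eq_mul]

lemma windows_pairs (n l : ℕ) (A : Finset ℕ) (hsub : A ⊆ Finset.Icc 1 n)
    (hinj : ∀ p ∈ A.offDiag, ∀ q ∈ A.offDiag,
      (p.1:ℤ) - p.2 = (q.1:ℤ) - q.2 → p = q)
    (hg : ∑ d ∈ Finset.Icc (1-(l:ℤ)) ((l:ℤ)-1), (l - d.natAbs) = l*l) :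
    ∑ t ∈ Finset.Icc (1-(l:ℤ)) ((n:ℤ)-1),
      ((A.filter (fun a : ℕ => t+1 ≤ (a:ℤ) ∧ (a:ℤ) ≤ t+l)).offDiag).card ≤ l*l := by
  have hfo : ∀ t : ℤ, (A.filter (fun a : ℕ => t+1 ≤ (a:ℤ) ∧ (a:ℤ) ≤ t+l)).offDiag
      = A.offDiag.filter (fun p => (t+1 ≤ (p.1:ℤ) ∧ (p.1:ℤ) ≤ t+l) ∧
          (t+1 ≤ (p.2:ℤ) ∧ (p.2:ℤ) ≤ t+l)) := by
    intro t
    ext p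
    simp only [Finset.mem_offDiag, Finset.mem_filter]
    tauto
  simp_rw [hfo, Finset.card_filter]
  rw [Finset.sum_comm]
  have key : ∀ p ∈ A.offDiag, (∑ t ∈ Finset.Icc (1-(l:ℤ)) ((n:ℤ)-1),
      if ((t+1 ≤ (p.1:ℤ) ∧ (p.1:ℤ) ≤ t+l) ∧ (t+1 ≤ (p.2:ℤ) ∧ (p.2:ℤ) ≤ t+l)) then 1 else 0)
      = l - ((p.1:ℤ) - p.2).natAbs := by
    intro p hp
    rw [Finset.mem_offDiag] at hp
    have h1 := Finset.mem_Icc.mp (hsub hp.1)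
    have h2 := Finset.mem_Icc.mp (hsub hp.2.1)
    rw [Finset.sum_boole]
    have : (Finset.Icc (1-(l:ℤ)) ((n:ℤ)-1)).filter
        (fun t => (t+1 ≤ (p.1:ℤ) ∧ (p.1:ℤ) ≤ t+l) ∧ (t+1 ≤ (p.2:ℤ) ∧ (p.2:ℤ) ≤ t+l))
        = Finset.Icc (max (p.1:ℤ) (p.2:ℤ) - l) (min (p.1:ℤ) (p.2:ℤ) - 1) := by
      ext t; simp only [Finset.mem_filter, Finset.mem_Icc]; omega
    rw [this, Int.card_Icc]
    simp only [Nat.cast_id]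
    rcases le_total (p.1:ℤ) (p.2:ℤ) with h | h
    · rw [max_eq_right h, min_eq_left h]; omega
    · rw [max_eq_left h, min_eq_right h]; omega
  rw [Finset.sum_congr rfl key]
  set D := A.offDiag.image (fun p : ℕ × ℕ => (p.1:ℤ) - p.2) with hD
  have himg : ∑ p ∈ A.offDiag, (l - ((p.1:ℤ) - p.2).natAbs)
      = ∑ d ∈ D, (l - d.natAbs) :=
    (Finset.sum_image (f := fun d : ℤ => l - d.natAbs) hinj).symm
  rw [himg]
  have hsplit : ∑ d ∈ D, (l - d.natAbs)
      = ∑ d ∈ D ∩ Finset.Icc (1-(l:ℤ)) ((l:ℤ)-1), (l - d.natAbs) := by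
    apply (Finset.sum_subset Finset.inter_subset_left ?_).symm
    intro x hx hnx
    have : x ∉ Finset.Icc (1-(l:ℤ)) ((l:ℤ)-1) := by
      intro hmem; exact hnx (Finset.mem_inter.mpr ⟨hx, hmem⟩)
    simp only [Finset.mem_Icc] at this
    omega
  rw [hsplit, ← hg]
  exact Finset.sum_le_sum_of_subset Finset.inter_subset_right

set_option maxHeartbeats 1000000 in
theorem sidon_upper_bound (n : ℕ) (A : Finset ℕ)
    (hsub : A ⊆ Finset.Icc 1 n)
    (hsidon : ∀ a ∈ A, ∀ b ∈ A, ∀ c ∈ A, ∀ d ∈ A,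
      a + b = c + d → (a = c ∧ b = d) ∨ (a = d ∧ b = c)) :
    (A.card : ℝ) < (n : ℝ) ^ ((1 : ℝ) / 2) + (n : ℝ) ^ ((1 : ℝ) / 4) + 1 := by
  rcases Nat.eq_zero_or_pos n with hn0 | hn
  · subst hn0
    have hA : A = ∅ := by
      rw [← Finset.subset_empty]
      simpa using hsub
    rw [hA]
    simp [Real.zero_rpow]
  -- main case
  have hn1 : (1:ℝ) ≤ (n:ℝ) := by exact_mod_cast hn
  set q : ℝ := (n:ℝ) ^ ((1:ℝ)/4) with hqdef
  have hq1 : 1 ≤ q := Real.one_le_rpow hn1 (by norm_num)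
  have hq4 : q^4 = (n:ℝ) := by
    rw [hqdef, ← Real.rpow_natCast ((n:ℝ) ^ ((1:ℝ)/4)) 4, ← Real.rpow_mul (by positivity)]
    norm_num
  have hq2 : (n:ℝ) ^ ((1:ℝ)/2) = q^2 := by
    rw [hqdef, ← Real.rpow_natCast ((n:ℝ) ^ ((1:ℝ)/4)) 2, ← Real.rpow_mul (by positivity)]
    norm_num
  have hq3 : (n:ℝ) ^ ((3:ℝ)/4) = q^3 := by
    rw [hqdef, ← Real.rpow_natCast ((n:ℝ) ^ ((1:ℝ)/4)) 3, ← Real.rpow_mul (by positivity)]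
    norm_num
  obtain ⟨l, hl1, hlq, hlq2⟩ : ∃ l : ℕ, 1 ≤ l ∧ q^3 < (l:ℝ) ∧ (l:ℝ) ≤ q^3 + 1 := by
    refine ⟨⌊(n:ℝ) ^ ((3:ℝ)/4)⌋₊ + 1, Nat.le_add_left 1 _, ?_, ?_⟩
    · rw [← hq3]
      push_cast
      exact Nat.lt_floor_add_one _
    · rw [← hq3]
      push_cast
      have := Nat.floor_le (show (0:ℝ) ≤ (n:ℝ) ^ ((3:ℝ)/4) by positivity)
      linarith
  -- injectivity of differences
  have hinj : ∀ p ∈ A.offDiag, ∀ r ∈ A.offDiag,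
      (p.1:ℤ) - p.2 = (r.1:ℤ) - r.2 → p = r := by
    intro p hp r hr hd
    rw [Finset.mem_offDiag] at hp hr
    have hsum : p.1 + r.2 = r.1 + p.2 := by
      have : (p.1:ℤ) + r.2 = r.1 + p.2 := by linarith
      exact_mod_cast this
    rcases hsidon p.1 hp.1 r.2 hr.2.1 r.1 hr.1 p.2 hp.2.1 hsum with ⟨h1, h2⟩ | ⟨h1, h2⟩
    · exact Prod.ext h1 h2.symm
    · exact absurd h1 hp.2.2
  have hS1 := windows_sum n l A hsub
  have hS2 := windows_pairs n l A hsub hinj (sumg l)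
  set T := Finset.Icc (1-(l:ℤ)) ((n:ℤ)-1) with hT
  set f : ℤ → ℕ := fun t => (A.filter (fun a : ℕ => t+1 ≤ (a:ℤ) ∧ (a:ℤ) ≤ t+l)).card with hf
  have hsq : ∑ t ∈ T, f t ^ 2 ≤ l*l + A.card * l := by
    have hptw : ∀ t ∈ T, f t ^ 2
        = (A.filter (fun a : ℕ => t+1 ≤ (a:ℤ) ∧ (a:ℤ) ≤ t+l)).offDiag.card + f t := by
      intro t _
      rw [Finset.offDiag_card]
      have hft : f t = (A.filter (fun a : ℕ => t+1 ≤ (a:ℤ) ∧ (a:ℤ) ≤ t+l)).card := rfl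
      rw [← hft]
      have h1 : f t ≤ f t * f t := by
        rcases Nat.eq_zero_or_pos (f t) with h | h
        · simp [h]
        · exact Nat.le_mul_of_pos_left _ h
      rw [pow_two]
      omega
    rw [Finset.sum_congr rfl hptw, Finset.sum_add_distrib]
    exact Nat.add_le_add hS2 (le_of_eq hS1)
  have hTcard : T.card = n + l - 1 := by
    rw [hT, Int.card_Icc]
    omega
  have hCS : (A.card * l)^2 ≤ (n + l - 1) * (l*l + A.card * l) := by
    calc (A.card * l)^2 = (∑ t ∈ T, f t)^2 := by rw [hS1]
    _ ≤ T.card * ∑ t ∈ T, f t ^ 2 := sq_sum_le_card_mul_sum_sq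
    _ ≤ (n + l - 1) * (l*l + A.card * l) := by
        rw [hTcard]; exact Nat.mul_le_mul_left _ hsq
  -- move to ℝ
  set K : ℝ := (A.card : ℝ) with hK
  set L : ℝ := (l : ℝ) with hL
  have hK0 : 0 ≤ K := by positivity
  have hL0 : (0:ℝ) < L := by
    have : 0 < q^3 := by positivity
    linarith
  have hmainR : K^2 * L^2 ≤ ((n:ℝ) + L - 1) * (L*L + K*L) := by
    have hcast : ((n + l - 1 : ℕ) : ℝ) = (n:ℝ) + L - 1 := by
      rw [Nat.cast_sub (by omega), Nat.cast_add, Nat.cast_one]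
    have hR := (Nat.cast_le (α := ℝ)).mpr hCS
    rw [Nat.cast_pow, Nat.cast_mul, Nat.cast_mul, hcast, Nat.cast_add, Nat.cast_mul,
      Nat.cast_mul] at hR
    have heq : K^2 * L^2 = ((A.card:ℝ) * (l:ℝ))^2 := by rw [hK, hL]; ring
    rw [heq]
    exact hR
  have hmain2 : K^2 * L ≤ ((n:ℝ) + L - 1) * (L + K) := by
    have h : (K^2 * L) * L ≤ (((n:ℝ) + L - 1) * (L + K)) * L := by nlinarith [hmainR]
    exact le_of_mul_le_mul_right h hL0
  -- endgame
  rw [hq2]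
  by_contra hcon
  push_neg at hcon
  rw [← hq4] at hmain2
  have hq3pos : (0:ℝ) < q^3 := by positivity
  have hc1 : K - (q^2+q+1) ≥ 0 := by linarith
  have hc2 : K + (q^2+q+1) ≥ 0 := by nlinarith [hK0, hq1]
  have hK2 : K^2 ≥ q^4 + 2*q^3 + 3*q^2 + 2*q + 1 := by nlinarith [mul_nonneg hc1 hc2]
  have hpos : K^2 - q^4 - L + 1 ≥ q^3 := by nlinarith [hK2, hlq2, hq1]
  have h2 : K^2 * L - (q^4 + L - 1) * L > q^3 * (K^2 - q^4 - L + 1) := by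
    have hprod : (L - q^3) * (K^2 - q^4 - L + 1) > 0 :=
      mul_pos (by linarith) (by nlinarith [hpos, hq3pos])
    nlinarith [hprod]
  have hfq : K^2 - (q+1)*K - q^4 - q^3 - q^2 ≥ 0 := by
    have hc3 : K + (q^2+q+1) - (q+1) ≥ 0 := by nlinarith [hK0, hq1]
    nlinarith [mul_nonneg hc1 hc3]
  have h3 : q^3 * (K^2 - q^4 - L + 1) ≥ (q^4 + L - 1) * K := by
    have e1 : (0:ℝ) ≤ q^3 * (K^2 - (q+1)*K - q^4 - q^3 - q^2) := mul_nonneg (le_of_lt hq3pos) hfq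
    have e2 : (0:ℝ) ≤ K * (q^3 + 1 - L) := mul_nonneg hK0 (by linarith)
    have e3 : (0:ℝ) ≤ q^3 * (q^3 + 1 - L) := mul_nonneg (le_of_lt hq3pos) (by linarith)
    have e4 : (0:ℝ) ≤ q^5 := by positivity
    nlinarith [e1, e2, e3, e4]
  nlinarith [h2, h3, hmain2]
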